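/- In the bipartite reduction graph G_{X,C} (with edge weights in {0,1}) built from a 3SAT instance, any matching of weight |X| + |C| + 1 contains exactly |X| + |C| + 1 edges of weight 1 and no edges of weight 0; moreover if such a matching is connected, then the assignment setting x_i to true iff x_i⁺ is saturated satisfies every clause of C. -/
import Mathlib


open Finset Classical

/-- `M` is a matching of `G`: a finite set of edges of `G` that are pairwise disjoint. -/
def IsMatchingF {V : Type*} (G : SimpleGraph V) (M : Finset (Sym2 V)) : Prop :=
  (∀ e ∈ M, e ∈ G.edgeSet) ∧
    ∀ e ∈ M, ∀ f ∈ M, e ≠ f → ∀ v : V, ¬(v ∈ e ∧ v ∈ f)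

/-- The set of vertices saturated by the matching `M`. -/
def satSet {V : Type*} (M : Finset (Sym2 V)) : Set V := {v | ∃ e ∈ M, v ∈ e}

/-- Vertices of the bipartite reduction graph `G_{X,C}` for a 3SAT instance with `m`
variables and `q` clauses. -/
inductive BipV (m q : ℕ) : Type
  | hP | hN            -- the vertices `h⁺`, `h⁻`
  | var (i : Fin m)    -- the vertex `x_i`
  | varP (i : Fin m)   -- the vertex `x_i⁺`
  | varN (i : Fin m)   -- the vertex `x_i⁻`
  | clP (j : Fin q)    -- the vertex `c_j⁺`
  | clN (j : Fin q)    -- the vertex `c_j⁻`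
  deriving DecidableEq

instance (m q : ℕ) : Fintype (BipV m q) := by
  classical
  exact Fintype.ofSurjective
    (fun x : (Unit ⊕ Unit) ⊕ (Fin m ⊕ Fin m ⊕ Fin m) ⊕ (Fin q ⊕ Fin q) =>
      match x with
      | .inl (.inl _) => BipV.hP
      | .inl (.inr _) => BipV.hN
      | .inr (.inl (.inl i)) => BipV.var i
      | .inr (.inl (.inr (.inl i))) => BipV.varP i
      | .inr (.inl (.inr (.inr i))) => BipV.varN i
      | .inr (.inr (.inl j)) => BipV.clP j
      | .inr (.inr (.inr j)) => BipV.clN j)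
    (by intro v; cases v with
      | hP => exact ⟨.inl (.inl ()), rfl⟩
      | hN => exact ⟨.inl (.inr ()), rfl⟩
      | var i => exact ⟨.inr (.inl (.inl i)), rfl⟩
      | varP i => exact ⟨.inr (.inl (.inr (.inl i))), rfl⟩
      | varN i => exact ⟨.inr (.inl (.inr (.inr i))), rfl⟩
      | clP j => exact ⟨.inr (.inr (.inl j)), rfl⟩
      | clN j => exact ⟨.inr (.inr (.inr j)), rfl⟩)

/-- The weight `1` edges of the bipartite reduction graph: `h⁺h⁻`, `x_i⁺x_i`, `x_i x_i⁻`
and `c_j⁺c_j⁻`. -/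
def bipW1 (m q : ℕ) : Set (Sym2 (BipV m q)) :=
  {e | e = s(BipV.hP, BipV.hN) ∨
       (∃ i, e = s(BipV.var i, BipV.varP i)) ∨
       (∃ i, e = s(BipV.var i, BipV.varN i)) ∨
       (∃ j, e = s(BipV.clP j, BipV.clN j))}

/-- The edge set of the bipartite reduction graph `G_{X,C}`, where `cl j t` is the `t`-th
literal of clause `j`. -/
def bipEdges (m q : ℕ) (cl : Fin q → Fin 3 → Fin m × Bool) : Set (Sym2 (BipV m q)) :=
  {e | e = s(BipV.hP, BipV.hN) ∨
       (∃ i, e = s(BipV.var i, BipV.varP i) ∨ e = s(BipV.var i, BipV.varN i) ∨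
          e = s(BipV.var i, BipV.hP)) ∨
       (∃ j, e = s(BipV.clP j, BipV.clN j)) ∨
       (∃ (j : Fin q) (t : Fin 3), (cl j t).2 = true ∧
          e = s(BipV.clP j, BipV.varP (cl j t).1)) ∨
       (∃ (j : Fin q) (t : Fin 3), (cl j t).2 = false ∧
          e = s(BipV.clP j, BipV.varN (cl j t).1))}

/-- The bipartite reduction graph `G_{X,C}`. -/
def bipGraph (m q : ℕ) (cl : Fin q → Fin 3 → Fin m × Bool) : SimpleGraph (BipV m q) :=
  SimpleGraph.fromEdgeSet (bipEdges m q cl)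

/-- The edge weights of `G_{X,C}`: `1` on `bipW1`, `0` elsewhere. -/
noncomputable def bipWeight (m q : ℕ) : Sym2 (BipV m q) → ℤ :=
  fun e => if e ∈ bipW1 m q then 1 else 0


noncomputable def bipTag (m q : ℕ) (e : Sym2 (BipV m q)) : Unit ⊕ Fin m ⊕ Fin q :=
  if h : ∃ i, e = s(BipV.var i, BipV.varP i) ∨ e = s(BipV.var i, BipV.varN i) then
    .inr (.inl h.choose)
  else if h : ∃ j, e = s(BipV.clP j, BipV.clN j) then .inr (.inr h.choose)
  else .inl ()

lemma bipTag_hv (m q : ℕ) : bipTag m q s(BipV.hP, BipV.hN) = .inl () := by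
  have h1 : ¬ ∃ i : Fin m, s(BipV.hP, (BipV.hN : BipV m q)) = s(BipV.var i, BipV.varP i) ∨
      s(BipV.hP, (BipV.hN : BipV m q)) = s(BipV.var i, BipV.varN i) := by
    simp [Sym2.eq_iff]
  have h2 : ¬ ∃ j : Fin q, s(BipV.hP, (BipV.hN : BipV m q)) = s(BipV.clP j, BipV.clN j) := by
    simp [Sym2.eq_iff]
  simp [bipTag, h1, h2]

lemma bipTag_varP (m q : ℕ) (i : Fin m) :
    bipTag m q s(BipV.var i, BipV.varP i) = .inr (.inl i) := by
  have h : ∃ i' : Fin m, s(BipV.var i, (BipV.varP i : BipV m q)) = s(BipV.var i', BipV.varP i') ∨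
      s(BipV.var i, (BipV.varP i : BipV m q)) = s(BipV.var i', BipV.varN i') := ⟨i, Or.inl rfl⟩
  rw [bipTag, dif_pos h]
  have hc := h.choose_spec
  have : h.choose = i := by
    rcases hc with hc | hc <;> rw [Sym2.eq_iff] at hc <;>
      rcases hc with ⟨h1, h2⟩ | ⟨h1, h2⟩ <;>
      first | (injection h1 with h1'; exact h1'.symm) | cases h1 | cases h2
  rw [this]

lemma bipTag_varN (m q : ℕ) (i : Fin m) :
    bipTag m q s(BipV.var i, BipV.varN i) = .inr (.inl i) := by
  have h : ∃ i' : Fin m, s(BipV.var i, (BipV.varN i : BipV m q)) = s(BipV.var i', BipV.varP i') ∨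
      s(BipV.var i, (BipV.varN i : BipV m q)) = s(BipV.var i', BipV.varN i') := ⟨i, Or.inr rfl⟩
  rw [bipTag, dif_pos h]
  have hc := h.choose_spec
  have : h.choose = i := by
    rcases hc with hc | hc <;> rw [Sym2.eq_iff] at hc <;>
      rcases hc with ⟨h1, h2⟩ | ⟨h1, h2⟩ <;>
      first | (injection h1 with h1'; exact h1'.symm) | cases h1 | cases h2
  rw [this]

lemma bipTag_cl (m q : ℕ) (j : Fin q) :
    bipTag m q s(BipV.clP j, BipV.clN j) = .inr (.inr j) := by
  have h1 : ¬ ∃ i : Fin m, s(BipV.clP j, (BipV.clN j : BipV m q)) = s(BipV.var i, BipV.varP i) ∨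
      s(BipV.clP j, (BipV.clN j : BipV m q)) = s(BipV.var i, BipV.varN i) := by
    simp [Sym2.eq_iff]
  have h : ∃ j' : Fin q, s(BipV.clP j, (BipV.clN j : BipV m q)) = s(BipV.clP j', BipV.clN j') :=
    ⟨j, rfl⟩
  rw [bipTag, dif_neg h1, dif_pos h]
  have hc := h.choose_spec
  have : h.choose = j := by
    rw [Sym2.eq_iff] at hc
    rcases hc with ⟨h1, h2⟩ | ⟨h1, h2⟩ <;>
      first | (injection h1 with h1'; exact h1'.symm) | cases h1 | cases h2
  rw [this]

/-- In the bipartite reduction graph, a matching of weight `|X| + |C| + 1` consists of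
exactly `|X| + |C| + 1` weight-1 edges and no weight-0 edges; and if such a matching is
connected then setting `x_i` true iff `x_i⁺` is saturated satisfies every clause. -/
theorem bip_matching_weight_structure (m q : ℕ)
    (cl : Fin q → Fin 3 → Fin m × Bool) (M : Finset (Sym2 (BipV m q)))
    (hM : IsMatchingF (bipGraph m q cl) M)
    (hw : ∑ e ∈ M, bipWeight m q e = (m : ℤ) + q + 1) :
    ((∀ e ∈ M, bipWeight m q e = 1) ∧ M.card = m + q + 1) ∧
    (((bipGraph m q cl).induce (satSet M)).Preconnected →
      ∃ σ : Fin m → Bool,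
        (∀ i : Fin m, σ i = true ↔ BipV.varP i ∈ satSet M) ∧
        ∀ j : Fin q, ∃ t : Fin 3, σ (cl j t).1 = (cl j t).2) := by
  classical
  obtain ⟨hedge, hdisj⟩ := hM
  have hmemE : ∀ e ∈ M, e ∈ bipEdges m q cl := by
    intro e he
    have h := hedge e he
    rw [bipGraph, SimpleGraph.edgeSet_fromEdgeSet] at h
    exact h.1
  set W1 := M.filter (fun e => e ∈ bipW1 m q) with hW1
  have hsum : ∑ e ∈ M, bipWeight m q e = (W1.card : ℤ) := by
    simp only [bipWeight]
    exact Finset.sum_boole _ _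
  have hcardW1 : W1.card = m + q + 1 := by
    have h := hw
    rw [hsum] at h
    exact_mod_cast h
  have hinj : Set.InjOn (bipTag m q) W1 := by
    intro e he f hf hef
    rw [Finset.coe_filter, Set.mem_setOf_eq] at he hf
    obtain ⟨heM, he2⟩ := he
    obtain ⟨hfM, hf2⟩ := hf
    simp only [bipW1, Set.mem_setOf_eq] at he2 hf2
    rcases he2 with rfl | ⟨i, rfl⟩ | ⟨i, rfl⟩ | ⟨j, rfl⟩ <;>
      rcases hf2 with rfl | ⟨i', rfl⟩ | ⟨i', rfl⟩ | ⟨j', rfl⟩ <;>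
      simp only [bipTag_hv, bipTag_varP, bipTag_varN, bipTag_cl, Sum.inr.injEq,
        Sum.inl.injEq, reduceCtorEq] at hef <;>
      try rfl
    · subst hef; rfl
    · subst hef
      by_contra hne
      exact hdisj _ heM _ hfM hne (BipV.var i)
        ⟨by simp [Sym2.mem_iff], by simp [Sym2.mem_iff]⟩
    · subst hef
      by_contra hne
      exact hdisj _ heM _ hfM hne (BipV.var i)
        ⟨by simp [Sym2.mem_iff], by simp [Sym2.mem_iff]⟩
    · subst hef; rfl
    · subst hef; rfl
  have himg : Finset.image (bipTag m q) W1 = Finset.univ := by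
    apply Finset.eq_univ_of_card
    rw [Finset.card_image_of_injOn hinj, hcardW1]
    simp only [Fintype.card_sum, Fintype.card_unit, Fintype.card_fin]
    omega
  have hget : ∀ t : Unit ⊕ Fin m ⊕ Fin q, ∃ e, (e ∈ M ∧ e ∈ bipW1 m q) ∧ bipTag m q e = t := by
    intro t
    have ht : t ∈ Finset.image (bipTag m q) W1 := by rw [himg]; exact Finset.mem_univ _
    obtain ⟨e, heW, htag⟩ := Finset.mem_image.mp ht
    rw [hW1, Finset.mem_filter] at heW
    exact ⟨e, heW, htag⟩
  have hHN : s(BipV.hP, (BipV.hN : BipV m q)) ∈ M := by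
    obtain ⟨e, ⟨heM, he2⟩, htag⟩ := hget (Sum.inl ())
    simp only [bipW1, Set.mem_setOf_eq] at he2
    rcases he2 with rfl | ⟨i, rfl⟩ | ⟨i, rfl⟩ | ⟨j, rfl⟩
    · exact heM
    all_goals simp [bipTag_varP, bipTag_varN, bipTag_cl] at htag
  have hvar : ∀ i : Fin m,
      s(BipV.var i, BipV.varP i) ∈ M ∨ s(BipV.var i, BipV.varN i) ∈ M := by
    intro i
    obtain ⟨e, ⟨heM, he2⟩, htag⟩ := hget (Sum.inr (Sum.inl i))
    simp only [bipW1, Set.mem_setOf_eq] at he2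
    rcases he2 with rfl | ⟨i', rfl⟩ | ⟨i', rfl⟩ | ⟨j', rfl⟩
    · simp [bipTag_hv] at htag
    · simp only [bipTag_varP, Sum.inr.injEq, Sum.inl.injEq] at htag
      subst htag; exact Or.inl heM
    · simp only [bipTag_varN, Sum.inr.injEq, Sum.inl.injEq] at htag
      subst htag; exact Or.inr heM
    · simp [bipTag_cl] at htag
  have hcl : ∀ j : Fin q, s(BipV.clP j, BipV.clN j) ∈ M := by
    intro j
    obtain ⟨e, ⟨heM, he2⟩, htag⟩ := hget (Sum.inr (Sum.inr j))
    simp only [bipW1, Set.mem_setOf_eq] at he2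
    rcases he2 with rfl | ⟨i', rfl⟩ | ⟨i', rfl⟩ | ⟨j', rfl⟩
    · simp [bipTag_hv] at htag
    · simp [bipTag_varP] at htag
    · simp [bipTag_varN] at htag
    · simp only [bipTag_cl, Sum.inr.injEq] at htag
      subst htag; exact heM
  have hall : ∀ e ∈ M, e ∈ bipW1 m q := by
    intro e heM
    by_contra hnot
    have hE := hmemE e heM
    simp only [bipEdges, Set.mem_setOf_eq] at hE
    rcases hE with rfl | ⟨i, rfl | rfl | rfl⟩ | ⟨j, rfl⟩ | ⟨j, t, ht, rfl⟩ | ⟨j, t, ht, rfl⟩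
    · exact hnot (Or.inl rfl)
    · exact hnot (Or.inr (Or.inl ⟨i, rfl⟩))
    · exact hnot (Or.inr (Or.inr (Or.inl ⟨i, rfl⟩)))
    · refine hdisj _ heM _ hHN ?_ BipV.hP ⟨by simp [Sym2.mem_iff], by simp [Sym2.mem_iff]⟩
      simp [Sym2.eq_iff]
    · exact hnot (Or.inr (Or.inr (Or.inr ⟨j, rfl⟩)))
    · refine hdisj _ heM _ (hcl j) ?_ (BipV.clP j)
        ⟨by simp [Sym2.mem_iff], by simp [Sym2.mem_iff]⟩
      simp [Sym2.eq_iff]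
    · refine hdisj _ heM _ (hcl j) ?_ (BipV.clP j)
        ⟨by simp [Sym2.mem_iff], by simp [Sym2.mem_iff]⟩
      simp [Sym2.eq_iff]
  have hMW1 : M = W1 := by
    rw [hW1]
    exact (Finset.filter_eq_self.mpr hall).symm
  refine ⟨⟨fun e he => by simp only [bipWeight, if_pos (hall e he)], by rw [hMW1, hcardW1]⟩, ?_⟩
  intro hpre
  have hsatP : ∀ i : Fin m, BipV.varP i ∈ satSet M ↔ s(BipV.var i, BipV.varP i) ∈ M := by
    intro i
    constructor
    · intro hv
      simp only [satSet, Set.mem_setOf_eq] at hv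
      obtain ⟨e, heM, hve⟩ := hv
      have h2 := hall e heM
      simp only [bipW1, Set.mem_setOf_eq] at h2
      rcases h2 with rfl | ⟨i', rfl⟩ | ⟨i', rfl⟩ | ⟨j', rfl⟩ <;> simp [Sym2.mem_iff] at hve
      subst hve; exact heM
    · intro h
      exact ⟨_, h, by simp [Sym2.mem_iff]⟩
  have hsatN : ∀ i : Fin m, BipV.varN i ∈ satSet M ↔ s(BipV.var i, BipV.varN i) ∈ M := by
    intro i
    constructor
    · intro hv
      simp only [satSet, Set.mem_setOf_eq] at hv
      obtain ⟨e, heM, hve⟩ := hv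
      have h2 := hall e heM
      simp only [bipW1, Set.mem_setOf_eq] at h2
      rcases h2 with rfl | ⟨i', rfl⟩ | ⟨i', rfl⟩ | ⟨j', rfl⟩ <;> simp [Sym2.mem_iff] at hve
      subst hve; exact heM
    · intro h
      exact ⟨_, h, by simp [Sym2.mem_iff]⟩
  have hone : ∀ i : Fin m, s(BipV.var i, BipV.varN i) ∈ M → s(BipV.var i, BipV.varP i) ∉ M := by
    intro i hN hP
    exact hdisj _ hP _ hN (by simp [Sym2.eq_iff]) (BipV.var i)
      ⟨by simp [Sym2.mem_iff], by simp [Sym2.mem_iff]⟩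
  refine ⟨fun i => if BipV.varP i ∈ satSet M then true else false, fun i => ?_, fun j => ?_⟩
  · by_cases h : BipV.varP i ∈ satSet M <;> simp [h]
  by_contra hno
  push_neg at hno
  have hsatclP : BipV.clP j ∈ satSet M := ⟨_, hcl j, by simp [Sym2.mem_iff]⟩
  have hsatHP : (BipV.hP : BipV m q) ∈ satSet M := ⟨_, hHN, by simp [Sym2.mem_iff]⟩
  have key : ∀ a b : BipV m q, b ∈ satSet M → (bipGraph m q cl).Adj a b →
      (a = BipV.clP j ∨ a = BipV.clN j) → (b = BipV.clP j ∨ b = BipV.clN j) := by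
    intro a b hbsat hadj ha
    rw [bipGraph, SimpleGraph.fromEdgeSet_adj] at hadj
    obtain ⟨hE, hne⟩ := hadj
    simp only [bipEdges, Set.mem_setOf_eq] at hE
    rcases ha with rfl | rfl
    · rcases hE with h | ⟨i, h | h | h⟩ | ⟨j', h⟩ | ⟨j', t, ht, h⟩ | ⟨j', t, ht, h⟩
      · simp [Sym2.eq_iff] at h
      · simp [Sym2.eq_iff] at h
      · simp [Sym2.eq_iff] at h
      · simp [Sym2.eq_iff] at h
      · rw [Sym2.eq_iff] at h
        rcases h with ⟨h1, h2⟩ | ⟨h1, h2⟩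
        · injection h1 with h1; subst h1; exact Or.inr h2
        · exact absurd h1 (by simp)
      · rw [Sym2.eq_iff] at h
        rcases h with ⟨h1, h2⟩ | ⟨h1, h2⟩
        · injection h1 with h1
          subst h1
          subst h2
          exact absurd (by rw [if_pos hbsat, ht]) (hno t)
        · exact absurd h1 (by simp)
      · rw [Sym2.eq_iff] at h
        rcases h with ⟨h1, h2⟩ | ⟨h1, h2⟩
        · injection h1 with h1
          subst h1
          subst h2
          have hNmem : s(BipV.var (cl j t).1, BipV.varN (cl j t).1) ∈ M := (hsatN _).mp hbsat
          have hPnot : BipV.varP (cl j t).1 ∉ satSet M := fun hv =>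
            hone _ hNmem ((hsatP _).mp hv)
          exact absurd (by rw [if_neg hPnot, ht]) (hno t)
        · exact absurd h1 (by simp)
    · rcases hE with h | ⟨i, h | h | h⟩ | ⟨j', h⟩ | ⟨j', t, ht, h⟩ | ⟨j', t, ht, h⟩
      · simp [Sym2.eq_iff] at h
      · simp [Sym2.eq_iff] at h
      · simp [Sym2.eq_iff] at h
      · simp [Sym2.eq_iff] at h
      · rw [Sym2.eq_iff] at h
        rcases h with ⟨h1, h2⟩ | ⟨h1, h2⟩
        · exact absurd h1 (by simp)
        · injection h1 with h1; subst h1; exact Or.inl h2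
      · simp [Sym2.eq_iff] at h
      · simp [Sym2.eq_iff] at h
  have hindadj : ∀ a b : satSet M, ((bipGraph m q cl).induce (satSet M)).Adj a b →
      (bipGraph m q cl).Adj a.val b.val := by
    intro a b h
    simpa [SimpleGraph.induce] using h
  have hwalk : ∀ (u v : satSet M) (w : ((bipGraph m q cl).induce (satSet M)).Walk u v),
      (u.val = BipV.clP j ∨ u.val = BipV.clN j) →
      (v.val = BipV.clP j ∨ v.val = BipV.clN j) := by
    intro u v w
    induction w with
    | nil => exact id
    | @cons a b c h p ih =>
      intro hu
      exact ih (key a.val b.val b.property (hindadj _ _ h) hu)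
  obtain ⟨w⟩ := hpre ⟨BipV.clP j, hsatclP⟩ ⟨BipV.hP, hsatHP⟩
  have hend := hwalk _ _ w (Or.inl rfl)
  simp at hend
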